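/- Let D be a connected finite graph and let F, G be two maximal nested sets on D. Then the connected components of the union of all subdiagrams B belonging to the symmetric difference F Δ G are exactly the maximal unsaturated elements of F ∩ G, where C ∈ F ∩ G is unsaturated if n(C; F∩G) ≥ 2. -/

import Mathlib

open scoped Classical

section NestedSets

variable {V : Type*} [Fintype V] [DecidableEq V]

/-- The (induced subgraph on the) finite vertex set `B` is connected (in particular nonempty). -/
def Conn (G : SimpleGraph V) (B : Finset V) : Prop :=
  (G.induce (B : Set V)).Connected

/-- Two vertex sets are orthogonal: no edge of `G` joins a vertex of one to a vertex
of the other. -/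
def Orth (G : SimpleGraph V) (B C : Finset V) : Prop :=
  ∀ a ∈ B, ∀ b ∈ C, ¬ G.Adj a b

/-- Two subdiagrams are compatible if one contains the other or they are orthogonal. -/
def Compat (G : SimpleGraph V) (B C : Finset V) : Prop :=
  B ⊆ C ∨ C ⊆ B ∨ Orth G B C

/-- A nested set on the (connected) diagram `D` with vertex set `V`: a collection of
pairwise compatible connected subdiagrams containing `D` itself. -/
def Nested (G : SimpleGraph V) (H : Finset (Finset V)) : Prop :=
  Finset.univ ∈ H ∧ (∀ B ∈ H, Conn G B) ∧ ∀ B ∈ H, ∀ C ∈ H, Compat G B C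

/-- `iN H B` is the union of the elements of `H` strictly contained in `B`;
this coincides with the union of the *maximal* elements of `H` strictly contained in `B`. -/
noncomputable def iN (H : Finset (Finset V)) (B : Finset V) : Finset V :=
  (H.filter fun C => C ⊂ B).sup id

/-- `nN H B = n(B;H)` is the number of vertices of `B` not covered by the maximal
elements of `H` strictly contained in `B`. -/
noncomputable def nN (H : Finset (Finset V)) (B : Finset V) : ℕ :=
  (B \ iN H B).card

/-- `C` is a connected component of (the induced subgraph on) `S`. -/
def IsCC (G : SimpleGraph V) (S C : Finset V) : Prop :=
  C ⊆ S ∧ Conn G C ∧ ∀ C', C ⊆ C' → C' ⊆ S → Conn G C' → C' = C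

/-- A maximal nested set on `D`. -/
def MaxNested (G : SimpleGraph V) (F : Finset (Finset V)) : Prop :=
  Nested G F ∧ ∀ K, Nested G K → F ⊆ K → K = F

end NestedSets

set_option linter.unusedSectionVars false

section Infra

variable {V : Type*} [Fintype V] [DecidableEq V] (G : SimpleGraph V)

/-- adjacency within a finite vertex set -/
def NRel (s : Finset V) (x y : V) : Prop := x ∈ s ∧ y ∈ s ∧ G.Adj x y

/-- connectivity of a finite vertex set, phrased combinatorially -/
def NConn (s : Finset V) : Prop :=
  s.Nonempty ∧ ∀ a ∈ s, ∀ b ∈ s, Relation.ReflTransGen (NRel G s) a b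

variable {G}

lemma nrel_symm {s : Finset V} {x y : V} (h : NRel G s x y) : NRel G s y x :=
  ⟨h.2.1, h.1, h.2.2.symm⟩

lemma rtg_symm {s : Finset V} {x y : V} (h : Relation.ReflTransGen (NRel G s) x y) :
    Relation.ReflTransGen (NRel G s) y x := by
  induction h with
  | refl => exact .refl
  | tail _ hbc ih => exact Relation.ReflTransGen.head (nrel_symm hbc) ih

lemma rtg_mono {s t : Finset V} (hst : s ⊆ t) {x y : V}
    (h : Relation.ReflTransGen (NRel G s) x y) : Relation.ReflTransGen (NRel G t) x y :=
  by
  induction h with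
  | refl => exact .refl
  | tail _ hr ih => exact ih.tail ⟨hst hr.1, hst hr.2.1, hr.2.2⟩

lemma rtg_mem_right {s : Finset V} {x y : V} (hx : x ∈ s)
    (h : Relation.ReflTransGen (NRel G s) x y) : y ∈ s := by
  rcases h.cases_tail with rfl | ⟨c, _, hr⟩
  · exact hx
  · exact hr.2.1

lemma walk_rtg {B : Finset V} {u w : ↥(B : Set V)} (p : (G.induce (B : Set V)).Walk u w) :
    Relation.ReflTransGen (NRel G B) u w := by
  induction p with
  | nil => exact .refl
  | @cons x y z h p ih =>
    exact Relation.ReflTransGen.head ⟨x.2, y.2, h⟩ ih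

lemma rtg_walk {B : Finset V} {a b : V} (h : Relation.ReflTransGen (NRel G B) a b)
    (ha : a ∈ B) (hb : b ∈ B) :
    (G.induce (B : Set V)).Reachable ⟨a, ha⟩ ⟨b, hb⟩ := by
  induction h with
  | refl => rfl
  | @tail x y hxy hr ih =>
    exact SimpleGraph.Reachable.trans (ih (rtg_mem_right ha hxy))
      ⟨SimpleGraph.Walk.cons (by exact hr.2.2 : (G.induce (B : Set V)).Adj ⟨x, hr.1⟩ ⟨y, hr.2.1⟩) .nil⟩

lemma conn_iff {B : Finset V} : Conn G B ↔ NConn G B := by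
  rw [Conn, SimpleGraph.connected_iff]
  constructor
  · rintro ⟨hpre, hne⟩
    obtain ⟨⟨v, hv⟩⟩ := hne
    refine ⟨⟨v, hv⟩, fun a ha b hb => ?_⟩
    obtain ⟨w⟩ := hpre ⟨a, ha⟩ ⟨b, hb⟩
    exact walk_rtg w
  · rintro ⟨⟨v, hv⟩, hconn⟩
    exact ⟨fun a b => rtg_walk (hconn a a.2 b b.2) a.2 b.2, ⟨⟨v, hv⟩⟩⟩

lemma nconn_nonempty {B : Finset V} (h : NConn G B) : B.Nonempty := h.1

lemma orth_symm {B C : Finset V} (h : Orth G B C) : Orth G C B :=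
  fun a ha b hb hadj => h b hb a ha hadj.symm

lemma compat_symm {B C : Finset V} (h : Compat G B C) : Compat G C B := by
  rcases h with h | h | h
  · exact Or.inr (Or.inl h)
  · exact Or.inl h
  · exact Or.inr (Or.inr (orth_symm h))

lemma orth_of_subset {B C B' C' : Finset V} (h : Orth G B C) (hB : B' ⊆ B) (hC : C' ⊆ C) :
    Orth G B' C' := fun a ha b hb => h a (hB ha) b (hC hb)

/-- an orthogonal pair of connected sets sharing a vertex are both that singleton -/
lemma orth_overlap {B C : Finset V} (h : Orth G B C) (hB : NConn G B)
    {v : V} (hvB : v ∈ B) (hvC : v ∈ C) : B = {v} := by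
  apply Finset.eq_singleton_iff_unique_mem.2 ⟨hvB, fun b hb => ?_⟩
  rcases (hB.2 v hvB b hb).cases_head with h' | ⟨c, hr, _⟩
  · exact h'.symm
  · exact absurd hr.2.2.symm (h c hr.2.1 v hvC)

lemma compat_chain {B C : Finset V} (h : Compat G B C) (hB : NConn G B) (hC : NConn G C)
    {v : V} (hvB : v ∈ B) (hvC : v ∈ C) : B ⊆ C ∨ C ⊆ B := by
  rcases h with h | h | h
  · exact Or.inl h
  · exact Or.inr h
  · left
    rw [orth_overlap h hB hvB hvC]
    simpa using hvC

end Infra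

section Comp

variable {V : Type*} [Fintype V] [DecidableEq V] (G : SimpleGraph V)

/-- the connected component of `v` within `s` -/
noncomputable def comp (s : Finset V) (v : V) : Finset V :=
  s.filter (fun w => Relation.ReflTransGen (NRel G s) v w)

variable {G}

lemma mem_comp {s : Finset V} {v w : V} :
    w ∈ comp G s v ↔ w ∈ s ∧ Relation.ReflTransGen (NRel G s) v w := Finset.mem_filter

lemma self_mem_comp {s : Finset V} {v : V} (hv : v ∈ s) : v ∈ comp G s v :=
  mem_comp.2 ⟨hv, .refl⟩

lemma comp_subset {s : Finset V} {v : V} : comp G s v ⊆ s := Finset.filter_subset _ _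

lemma comp_closed {s : Finset V} {v u w : V} (hu : u ∈ comp G s v) (hw : w ∈ s)
    (hadj : G.Adj u w) : w ∈ comp G s v := by
  rcases mem_comp.1 hu with ⟨hus, hr⟩
  exact mem_comp.2 ⟨hw, hr.tail ⟨hus, hw, hadj⟩⟩

lemma rtg_comp {s : Finset V} {v b : V} (hv : v ∈ s)
    (h : Relation.ReflTransGen (NRel G s) v b) :
    Relation.ReflTransGen (NRel G (comp G s v)) v b := by
  induction h with
  | refl => exact .refl
  | @tail x y hvx hxy ih =>
    exact ih.tail ⟨mem_comp.2 ⟨hxy.1, hvx⟩, mem_comp.2 ⟨hxy.2.1, hvx.tail hxy⟩, hxy.2.2⟩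

lemma nconn_comp {s : Finset V} {v : V} (hv : v ∈ s) : NConn G (comp G s v) := by
  refine ⟨⟨v, self_mem_comp hv⟩, fun a ha b hb => ?_⟩
  rcases mem_comp.1 ha with ⟨_, hra⟩
  rcases mem_comp.1 hb with ⟨_, hrb⟩
  exact (rtg_symm (rtg_comp hv hra)).trans (rtg_comp hv hrb)

lemma nconn_subset_comp {s A : Finset V} {v a : V} (hAs : A ⊆ s) (hA : NConn G A)
    (ha : a ∈ A) (hac : a ∈ comp G s v) : A ⊆ comp G s v := by
  intro b hb
  have hr := rtg_mono hAs (hA.2 a ha b hb)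
  rcases mem_comp.1 hac with ⟨_, hva⟩
  exact mem_comp.2 ⟨hAs hb, hva.trans hr⟩

lemma piece_stay {s : Finset V} {P : Finset (Finset V)}
    (hcov : ∀ w ∈ s, ∃ D ∈ P, w ∈ D)
    (hpair : ∀ D ∈ P, ∀ D' ∈ P, D ≠ D' → Orth G D D')
    {D : Finset V} (hD : D ∈ P) {a b : V}
    (h : Relation.ReflTransGen (NRel G s) a b) (ha : a ∈ D) : b ∈ D := by
  induction h with
  | refl => exact ha
  | @tail x y hax hxy ih =>
    obtain ⟨D', hD', hyD'⟩ := hcov y hxy.2.1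
    by_cases hDD : D = D'
    · exact hDD ▸ hyD'
    · exact absurd hxy.2.2 (hpair D hD D' hD' hDD x ih y hyD')

lemma nconn_subset_piece {s A : Finset V} {P : Finset (Finset V)}
    (hcov : ∀ w ∈ s, ∃ D ∈ P, w ∈ D)
    (hpair : ∀ D ∈ P, ∀ D' ∈ P, D ≠ D' → Orth G D D')
    (hAs : A ⊆ s) (hA : NConn G A) : ∃ D ∈ P, A ⊆ D := by
  obtain ⟨a, ha⟩ := hA.1
  obtain ⟨D, hD, haD⟩ := hcov a (hAs ha)
  exact ⟨D, hD, fun b hb => piece_stay hcov hpair hD (rtg_mono hAs (hA.2 a ha b hb)) haD⟩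

end Comp

section NestedLemmas

variable {V : Type*} [Fintype V] [DecidableEq V] {G : SimpleGraph V}

lemma nested_inter {F K : Finset (Finset V)} (hF : Nested G F) (hK : Nested G K) :
    Nested G (F ∩ K) := by
  refine ⟨Finset.mem_inter.2 ⟨hF.1, hK.1⟩, fun B hB => hF.2.1 B (Finset.mem_inter.1 hB).1,
    fun B hB C hC => hF.2.2 B (Finset.mem_inter.1 hB).1 C (Finset.mem_inter.1 hC).1⟩

lemma nested_nconn {H : Finset (Finset V)} (hH : Nested G H) {C : Finset V} (hC : C ∈ H) :
    NConn G C := conn_iff.1 (hH.2.1 C hC)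

lemma absorb {F : Finset (Finset V)} (hF : MaxNested G F) {A : Finset V}
    (hA : Conn G A) (hcompat : ∀ B ∈ F, Compat G A B) : A ∈ F := by
  have hnested : Nested G (insert A F) := by
    refine ⟨Finset.mem_insert_of_mem hF.1.1, ?_, ?_⟩
    · intro B hB
      rcases Finset.mem_insert.1 hB with rfl | hB
      · exact hA
      · exact hF.1.2.1 B hB
    · intro B hB C hC
      rcases Finset.mem_insert.1 hB with hB1 | hB1
      · subst hB1
        rcases Finset.mem_insert.1 hC with hC1 | hC1
        · subst hC1; exact Or.inl (le_refl _)
        · exact hcompat C hC1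
      · rcases Finset.mem_insert.1 hC with hC1 | hC1
        · subst hC1; exact compat_symm (hcompat B hB1)
        · exact hF.1.2.2 B hB1 C hC1
  have := hF.2 _ hnested (Finset.subset_insert _ _)
  rw [← this]
  exact Finset.mem_insert_self _ _

lemma mem_iN {H : Finset (Finset V)} {C : Finset V} {v : V} :
    v ∈ iN H C ↔ ∃ B ∈ H, B ⊂ C ∧ v ∈ B := by
  rw [iN, Finset.mem_sup]
  constructor
  · rintro ⟨B, hB, hv⟩
    rcases Finset.mem_filter.1 hB with ⟨h1, h2⟩
    exact ⟨B, h1, h2, hv⟩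
  · rintro ⟨B, h1, h2, hv⟩
    exact ⟨B, Finset.mem_filter.2 ⟨h1, h2⟩, hv⟩

lemma subset_iN {H : Finset (Finset V)} {C B : Finset V} (hB : B ∈ H) (hBC : B ⊂ C) :
    B ⊆ iN H C := fun v hv => mem_iN.2 ⟨B, hB, hBC, hv⟩

/-- the maximal elements of `H` strictly contained in `C` -/
noncomputable def MaxP (H : Finset (Finset V)) (C : Finset V) : Finset (Finset V) :=
  H.filter (fun D => D ⊂ C ∧ ∀ D' ∈ H, D' ⊂ C → D ⊆ D' → D' = D)

lemma maxp_mem {H : Finset (Finset V)} {C D : Finset V} (hD : D ∈ MaxP H C) :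
    D ∈ H ∧ D ⊂ C ∧ ∀ D' ∈ H, D' ⊂ C → D ⊆ D' → D' = D := by
  rcases Finset.mem_filter.1 hD with ⟨h1, h2, h3⟩
  exact ⟨h1, h2, h3⟩

lemma exists_maxp {H : Finset (Finset V)} {C E : Finset V} (hE : E ∈ H) (hEC : E ⊂ C) :
    ∃ D ∈ MaxP H C, E ⊆ D := by
  have hne : (H.filter (fun D => D ⊂ C ∧ E ⊆ D)).Nonempty :=
    ⟨E, Finset.mem_filter.2 ⟨hE, hEC, le_refl _⟩⟩
  obtain ⟨D, hD, hmax⟩ := Finset.exists_max_image _ Finset.card hne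
  rcases Finset.mem_filter.1 hD with ⟨hDH, hDC, hED⟩
  refine ⟨D, Finset.mem_filter.2 ⟨hDH, hDC, fun D' hD' hD'C hDD' => ?_⟩, hED⟩
  have : D' ∈ H.filter (fun D => D ⊂ C ∧ E ⊆ D) :=
    Finset.mem_filter.2 ⟨hD', hD'C, hED.trans hDD'⟩
  exact (Finset.eq_of_subset_of_card_le hDD' (hmax D' this)).symm

lemma maxp_pairwise {H : Finset (Finset V)} (hH : Nested G H) {C D D' : Finset V}
    (hD : D ∈ MaxP H C) (hD' : D' ∈ MaxP H C) (hne : D ≠ D') : Orth G D D' := by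
  obtain ⟨h1, h2, h3⟩ := maxp_mem hD
  obtain ⟨h1', h2', h3'⟩ := maxp_mem hD'
  rcases hH.2.2 D h1 D' h1' with h | h | h
  · exact absurd (h3 D' h1' h2' h) hne.symm
  · exact absurd (h3' D h1 h2 h).symm hne.symm
  · exact h

lemma iN_cover {H : Finset (Finset V)} {C : Finset V} {v : V} (hv : v ∈ iN H C) :
    ∃ D ∈ MaxP H C, v ∈ D := by
  obtain ⟨B, hB, hBC, hvB⟩ := mem_iN.1 hv
  obtain ⟨D, hD, hBD⟩ := exists_maxp hB hBC
  exact ⟨D, hD, hBD hvB⟩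

lemma free_nonempty {H : Finset (Finset V)} (hH : Nested G H) {C : Finset V} (hC : C ∈ H) :
    (C \ iN H C).Nonempty := by
  by_contra h
  have hsub : C ⊆ iN H C := by
    intro v hv
    by_contra hv'
    exact h ⟨v, Finset.mem_sdiff.2 ⟨hv, hv'⟩⟩
  obtain ⟨D, hD, hCD⟩ := nconn_subset_piece (s := C) (P := MaxP H C)
    (fun w hw => iN_cover (hsub hw)) (fun D hD D' hD' hne => maxp_pairwise hH hD hD' hne)
    (le_refl _) (nested_nconn hH hC)
  exact (Finset.ssubset_def.1 (maxp_mem hD).2.1).2 hCD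

end NestedLemmas

section StructureLemmas

variable {V : Type*} [Fintype V] [DecidableEq V] {G : SimpleGraph V}

/-- In a maximal nested set, for a free vertex `x` of `C`, every connected component
of `C \ {x}` belongs to the nested set. -/
lemma compA {F : Finset (Finset V)} (hF : MaxNested G F) {C : Finset V} (hC : C ∈ F)
    {x : V} (hx : x ∈ C) (hx' : x ∉ iN F C) {v : V} (hv : v ∈ C) (hvx : v ≠ x) :
    comp G (C \ {x}) v ∈ F := by
  set A := comp G (C \ {x}) v with hA
  have hvCx : v ∈ C \ {x} := Finset.mem_sdiff.2 ⟨hv, by simpa using hvx⟩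
  have hACx : A ⊆ C \ {x} := comp_subset
  have hAC : A ⊆ C := hACx.trans (Finset.sdiff_subset)
  refine absorb hF (conn_iff.2 (nconn_comp hvCx)) (fun B hB => ?_)
  rcases hF.1.2.2 C hC B hB with h | h | h
  · exact Or.inl (hAC.trans h)
  · by_cases hBC : B = C
    · exact Or.inl (hBC ▸ hAC)
    · have hBC' : B ⊂ C := Finset.ssubset_iff_subset_ne.2 ⟨h, hBC⟩
      have hBin : B ⊆ iN F C := subset_iN hB hBC'
      have hBCx : B ⊆ C \ {x} := by
        intro b hb
        refine Finset.mem_sdiff.2 ⟨hBC'.1 hb, by simp; rintro rfl; exact hx' (hBin hb)⟩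
      by_cases hmeet : ∃ b ∈ B, b ∈ A
      · obtain ⟨b, hb, hbA⟩ := hmeet
        exact Or.inr (Or.inl (nconn_subset_comp hBCx (nested_nconn hF.1 hB) hb hbA))
      · refine Or.inr (Or.inr (fun a ha b hb hadj => ?_))
        exact hmeet ⟨b, hb, comp_closed ha (hBCx hb) hadj⟩
  · exact Or.inr (Or.inr (orth_of_subset h hAC (le_refl _)))

/-- In a maximal nested set every element has exactly one free vertex. -/
lemma free_singleton {F : Finset (Finset V)} (hF : MaxNested G F) {C : Finset V} (hC : C ∈ F) :
    ∃ x, C \ iN F C = {x} := by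
  obtain ⟨x, hx⟩ := free_nonempty hF.1 hC
  rcases Finset.mem_sdiff.1 hx with ⟨hxC, hxiN⟩
  refine ⟨x, Finset.Subset.antisymm ?_ (Finset.singleton_subset_iff.2 hx)⟩
  intro y hy
  rcases Finset.mem_sdiff.1 hy with ⟨hyC, hyiN⟩
  by_contra hyx
  have hyx' : y ≠ x := by simpa using hyx
  have hAF : comp G (C \ {x}) y ∈ F := compA hF hC hxC hxiN hyC hyx'
  have hAC : comp G (C \ {x}) y ⊂ C := by
    refine Finset.ssubset_iff_subset_ne.2 ⟨comp_subset.trans Finset.sdiff_subset, ?_⟩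
    intro hEq
    have hxA : x ∈ comp G (C \ {x}) y := by rw [hEq]; exact hxC
    have : x ∈ C \ {x} := comp_subset hxA
    simp at this
  exact hyiN (subset_iN hAF hAC (self_mem_comp (Finset.mem_sdiff.2 ⟨hyC, by simpa using hyx'⟩)))

end StructureLemmas

section P1sec

variable {V : Type*} [Fintype V] [DecidableEq V] {G : SimpleGraph V}

lemma iN_mono {K H : Finset (Finset V)} (h : K ⊆ H) (C : Finset V) : iN K C ⊆ iN H C := by
  intro v hv
  obtain ⟨B, h1, h2, h3⟩ := mem_iN.1 hv
  exact mem_iN.2 ⟨B, h h1, h2, h3⟩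

lemma P1 {F Gs : Finset (Finset V)} (hF : MaxNested G F) (hGs : MaxNested G Gs)
    {B : Finset V} (hBF : B ∈ F) (hBG : B ∉ Gs) :
    ∃ C ∈ F ∩ Gs, B ⊆ C ∧ 2 ≤ nN (F ∩ Gs) C := by
  set K := F ∩ Gs with hKdef
  have hK : Nested G K := nested_inter hF.1 hGs.1
  have hBconn : NConn G B := nested_nconn hF.1 hBF
  obtain ⟨b0, hb0⟩ := hBconn.1
  have hTne : (K.filter (fun C => B ⊆ C)).Nonempty :=
    ⟨Finset.univ, Finset.mem_filter.2 ⟨hK.1, Finset.subset_univ _⟩⟩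
  obtain ⟨C, hCT, hmin⟩ := Finset.exists_min_image _ Finset.card hTne
  rcases Finset.mem_filter.1 hCT with ⟨hCK, hBC⟩
  have hCF : C ∈ F := (Finset.mem_inter.1 hCK).1
  have hCGs : C ∈ Gs := (Finset.mem_inter.1 hCK).2
  have hminimal : ∀ C' ∈ K, B ⊆ C' → C ⊆ C' := by
    intro C' h1 h2
    rcases compat_chain (hK.2.2 C hCK C' h1) (nested_nconn hK hCK) (nested_nconn hK h1)
      (hBC hb0) (h2 hb0) with h | h
    · exact h
    · have he : C' = C := Finset.eq_of_subset_of_card_le h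
        (hmin C' (Finset.mem_filter.2 ⟨h1, h2⟩))
      rw [he]
  refine ⟨C, hCK, hBC, ?_⟩
  by_contra hsat
  have hcard : (C \ iN K C).card = 1 := by
    have h1 := Finset.card_pos.2 (free_nonempty hK hCK)
    simp only [nN] at hsat
    omega
  obtain ⟨x, hfree⟩ := Finset.card_eq_one.1 hcard
  have hxmem : x ∈ C \ iN K C := hfree ▸ Finset.mem_singleton_self x
  rcases Finset.mem_sdiff.1 hxmem with ⟨hxC, hxiK⟩
  have key : ∀ w ∈ C, w ≠ x → w ∈ iN K C := by
    intro w hw hwx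
    by_contra hwi
    have : w ∈ C \ iN K C := Finset.mem_sdiff.2 ⟨hw, hwi⟩
    rw [hfree] at this
    exact hwx (Finset.mem_singleton.1 this)
  have hxiG : x ∉ iN Gs C := by
    obtain ⟨y, hy⟩ := free_singleton hGs hCGs
    have hsub : C \ iN Gs C ⊆ C \ iN K C := by
      intro w hw
      rcases Finset.mem_sdiff.1 hw with ⟨h1, h2⟩
      exact Finset.mem_sdiff.2 ⟨h1, fun h3 => h2 (iN_mono Finset.inter_subset_right C h3)⟩
    have : y = x := by
      have := hsub (hy ▸ Finset.mem_singleton_self y)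
      rw [hfree] at this
      exact Finset.mem_singleton.1 this
    rw [this] at hy
    have := hy ▸ Finset.mem_singleton_self x
    exact (Finset.mem_sdiff.1 this).2
  have hcov : ∀ w ∈ iN K C, ∃ D ∈ MaxP K C, w ∈ D := fun w hw => iN_cover hw
  have hpair : ∀ D ∈ MaxP K C, ∀ D' ∈ MaxP K C, D ≠ D' → Orth G D D' :=
    fun D hD D' hD' hne => maxp_pairwise hK hD hD' hne
  have hDalt : ∀ D ∈ MaxP K C, D ⊆ B ∨ Orth G B D := by
    intro D hD
    obtain ⟨hDK, hDC, _⟩ := maxp_mem hD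
    rcases hF.1.2.2 B hBF D (Finset.mem_inter.1 hDK).1 with h | h | h
    · exact absurd (hminimal D hDK h) (Finset.ssubset_def.1 hDC).2
    · exact Or.inl h
    · exact Or.inr h
  by_cases hxB : x ∈ B
  · refine hBG (absorb hGs (hF.1.2.1 B hBF) (fun E hE => ?_))
    rcases hGs.1.2.2 C hCGs E hE with h | h | h
    · exact Or.inl (hBC.trans h)
    · by_cases hEC : E = C
      · exact Or.inl (hEC ▸ hBC)
      · have hEC' : E ⊂ C := Finset.ssubset_iff_subset_ne.2 ⟨h, hEC⟩
        have hEiK : E ⊆ iN K C := by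
          intro w hw
          refine key w (hEC'.1 hw) (fun hwx => ?_)
          exact hxiG (subset_iN hE hEC' (hwx ▸ hw))
        obtain ⟨D, hD, hED⟩ := nconn_subset_piece hcov hpair hEiK (nested_nconn hGs.1 hE)
        rcases hDalt D hD with h' | h'
        · exact Or.inr (Or.inl (hED.trans h'))
        · exact Or.inr (Or.inr (orth_of_subset h' (le_refl _) hED))
    · exact Or.inr (Or.inr (orth_of_subset h hBC (le_refl _)))
  · have hBiK : B ⊆ iN K C := fun w hw =>
      key w (hBC hw) (fun hwx => hxB (hwx ▸ hw))
    obtain ⟨D, hD, hBD⟩ := nconn_subset_piece hcov hpair hBiK hBconn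
    obtain ⟨hDK, hDC, _⟩ := maxp_mem hD
    exact (Finset.ssubset_def.1 hDC).2 (hminimal D hDK hBD)

end P1sec

section P2sec

variable {V : Type*} [Fintype V] [DecidableEq V] {G : SimpleGraph V}

lemma P2 {F Gs : Finset (Finset V)} (hF : MaxNested G F) (hGs : MaxNested G Gs)
    {C : Finset V} (hCK : C ∈ F ∩ Gs) (hunsat : 2 ≤ nN (F ∩ Gs) C)
    {v : V} (hv : v ∈ C) :
    ∃ B, ((B ∈ F ∧ B ∉ Gs) ∨ (B ∈ Gs ∧ B ∉ F)) ∧ v ∈ B := by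
  set K := F ∩ Gs with hKdef
  have hK : Nested G K := nested_inter hF.1 hGs.1
  have hCF : C ∈ F := (Finset.mem_inter.1 hCK).1
  have hCGs : C ∈ Gs := (Finset.mem_inter.1 hCK).2
  obtain ⟨x, hxfree⟩ := free_singleton hF hCF
  obtain ⟨y, hyfree⟩ := free_singleton hGs hCGs
  have hxmem : x ∈ C \ iN F C := hxfree ▸ Finset.mem_singleton_self x
  have hymem : y ∈ C \ iN Gs C := hyfree ▸ Finset.mem_singleton_self y
  rcases Finset.mem_sdiff.1 hxmem with ⟨hxC, hxiF⟩
  rcases Finset.mem_sdiff.1 hymem with ⟨hyC, hyiG⟩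
  have keyF : ∀ w ∈ C, w ≠ x → w ∈ iN F C := by
    intro w hw hwx
    by_contra hwi
    have : w ∈ C \ iN F C := Finset.mem_sdiff.2 ⟨hw, hwi⟩
    rw [hxfree] at this
    exact hwx (Finset.mem_singleton.1 this)
  have keyG : ∀ w ∈ C, w ≠ y → w ∈ iN Gs C := by
    intro w hw hwy
    by_contra hwi
    have : w ∈ C \ iN Gs C := Finset.mem_sdiff.2 ⟨hw, hwi⟩
    rw [hyfree] at this
    exact hwy (Finset.mem_singleton.1 this)
  have hxy : x ≠ y := by
    rintro rfl
    have hsub : C \ iN K C ⊆ {x} := by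
      intro w hw
      rcases Finset.mem_sdiff.1 hw with ⟨hwC, hwiK⟩
      by_contra hwx
      have hwx' : w ≠ x := by simpa using hwx
      have hAF : comp G (C \ {x}) w ∈ F := compA hF hCF hxC hxiF hwC hwx'
      have hAG : comp G (C \ {x}) w ∈ Gs := compA hGs hCGs hxC hyiG hwC hwx'
      have hAK : comp G (C \ {x}) w ∈ K := Finset.mem_inter.2 ⟨hAF, hAG⟩
      have hAC : comp G (C \ {x}) w ⊂ C := by
        refine Finset.ssubset_iff_subset_ne.2 ⟨comp_subset.trans Finset.sdiff_subset, ?_⟩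
        intro hEq
        have hxA : x ∈ comp G (C \ {x}) w := by rw [hEq]; exact hxC
        have : x ∈ C \ {x} := comp_subset hxA
        simp at this
      exact hwiK (subset_iN hAK hAC
        (self_mem_comp (Finset.mem_sdiff.2 ⟨hwC, by simpa using hwx'⟩)))
    have := Finset.card_le_card hsub
    simp only [Finset.card_singleton] at this
    simp only [nN] at hunsat
    omega
  by_cases hviK : v ∈ iN K C
  · obtain ⟨D, hD, hvD⟩ := iN_cover hviK
    obtain ⟨hDK, hDC, hDmax⟩ := maxp_mem hD
    have hDF : D ∈ F := (Finset.mem_inter.1 hDK).1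
    have hDGs : D ∈ Gs := (Finset.mem_inter.1 hDK).2
    by_cases hEF : ∃ E ∈ F, D ⊂ E ∧ E ⊂ C
    · obtain ⟨E, hE, hDE, hEC⟩ := hEF
      refine ⟨E, Or.inl ⟨hE, fun hEGs => ?_⟩, hDE.1 hvD⟩
      have he : E = D := hDmax E (Finset.mem_inter.2 ⟨hE, hEGs⟩) hEC hDE.1
      exact (Finset.ssubset_def.1 hDE).2 (by rw [he])
    by_cases hEG : ∃ E ∈ Gs, D ⊂ E ∧ E ⊂ C
    · obtain ⟨E, hE, hDE, hEC⟩ := hEG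
      refine ⟨E, Or.inr ⟨hE, fun hEF' => ?_⟩, hDE.1 hvD⟩
      have he : E = D := hDmax E (Finset.mem_inter.2 ⟨hEF', hE⟩) hEC hDE.1
      exact (Finset.ssubset_def.1 hDE).2 (by rw [he])
    · exfalso
      have hDCx : D ⊆ C \ {x} := by
        intro w hw
        refine Finset.mem_sdiff.2 ⟨hDC.1 hw, ?_⟩
        simp only [Finset.mem_singleton]
        rintro rfl
        exact hxiF (subset_iN hDF hDC hw)
      have hDCy : D ⊆ C \ {y} := by
        intro w hw
        refine Finset.mem_sdiff.2 ⟨hDC.1 hw, ?_⟩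
        simp only [Finset.mem_singleton]
        rintro rfl
        exact hyiG (subset_iN hDGs hDC hw)
      have hvCx : v ∈ C \ {x} := hDCx hvD
      have hvCy : v ∈ C \ {y} := hDCy hvD
      have hvx : v ≠ x := by simpa using (Finset.mem_sdiff.1 hvCx).2
      have hvy : v ≠ y := by simpa using (Finset.mem_sdiff.1 hvCy).2
      have hDconn : NConn G D := nested_nconn hK hDK
      have hDAx : D ⊆ comp G (C \ {x}) v :=
        nconn_subset_comp hDCx hDconn hvD (self_mem_comp hvCx)
      have hDAy : D ⊆ comp G (C \ {y}) v :=
        nconn_subset_comp hDCy hDconn hvD (self_mem_comp hvCy)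
      have hAxF : comp G (C \ {x}) v ∈ F := compA hF hCF hxC hxiF hv hvx
      have hAyG : comp G (C \ {y}) v ∈ Gs := compA hGs hCGs hyC hyiG hv hvy
      have hAxC : comp G (C \ {x}) v ⊂ C := by
        refine Finset.ssubset_iff_subset_ne.2 ⟨comp_subset.trans Finset.sdiff_subset, ?_⟩
        intro hEq
        have hxA : x ∈ comp G (C \ {x}) v := by rw [hEq]; exact hxC
        have : x ∈ C \ {x} := comp_subset hxA
        simp at this
      have hAyC : comp G (C \ {y}) v ⊂ C := by
        refine Finset.ssubset_iff_subset_ne.2 ⟨comp_subset.trans Finset.sdiff_subset, ?_⟩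
        intro hEq
        have hyA : y ∈ comp G (C \ {y}) v := by rw [hEq]; exact hyC
        have : y ∈ C \ {y} := comp_subset hyA
        simp at this
      have hAxD : comp G (C \ {x}) v = D := by
        by_contra hne
        exact hEF ⟨comp G (C \ {x}) v, hAxF,
          Finset.ssubset_iff_subset_ne.2 ⟨hDAx, fun h => hne h.symm⟩, hAxC⟩
      have hAyD : comp G (C \ {y}) v = D := by
        by_contra hne
        exact hEG ⟨comp G (C \ {y}) v, hAyG,
          Finset.ssubset_iff_subset_ne.2 ⟨hDAy, fun h => hne h.symm⟩, hAyC⟩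
      have hedge : ∀ d ∈ D, ∀ c ∈ C, c ∉ D → ¬ G.Adj d c := by
        intro d hd c hc hcD hadj
        have hdx : d ∈ comp G (C \ {x}) v := by rw [hAxD]; exact hd
        have hdy : d ∈ comp G (C \ {y}) v := by rw [hAyD]; exact hd
        have hcx : c = x := by
          by_contra h
          exact hcD (hAxD ▸ comp_closed hdx (Finset.mem_sdiff.2 ⟨hc, by simpa using h⟩) hadj)
        have hcy : c = y := by
          by_contra h
          exact hcD (hAyD ▸ comp_closed hdy (Finset.mem_sdiff.2 ⟨hc, by simpa using h⟩) hadj)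
        exact hxy (hcx ▸ hcy ▸ rfl)
      have hCconn : NConn G C := nested_nconn hF.1 hCF
      have hstay : ∀ b, Relation.ReflTransGen (NRel G C) v b → b ∈ D := by
        intro b h
        induction h with
        | refl => exact hvD
        | @tail p q hvp hpq ih =>
          by_contra hqD
          exact hedge p ih q hpq.2.1 hqD hpq.2.2
      exact (by simpa using
        (Finset.mem_sdiff.1 (hDCx (hstay x (hCconn.2 v hv x hxC)))).2 : False)
  · by_cases hvx : v = x
    · have hvy : v ≠ y := hvx ▸ hxy
      obtain ⟨D, hDGs, hDC, hvD⟩ := mem_iN.1 (keyG v hv hvy)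
      refine ⟨D, Or.inr ⟨hDGs, fun hDF => ?_⟩, hvD⟩
      exact hviK (subset_iN (Finset.mem_inter.2 ⟨hDF, hDGs⟩) hDC hvD)
    · obtain ⟨D, hDF, hDC, hvD⟩ := mem_iN.1 (keyF v hv hvx)
      refine ⟨D, Or.inl ⟨hDF, fun hDGs => ?_⟩, hvD⟩
      exact hviK (subset_iN (Finset.mem_inter.2 ⟨hDF, hDGs⟩) hDC hvD)

end P2sec

section Assemble

variable {V : Type*} [Fintype V] [DecidableEq V] {G : SimpleGraph V}

noncomputable def MU (G : SimpleGraph V) (K : Finset (Finset V)) : Finset (Finset V) :=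
  K.filter (fun C => 2 ≤ nN K C ∧ ∀ C' ∈ K, 2 ≤ nN K C' → ¬ C ⊂ C')

lemma mem_MU {K : Finset (Finset V)} {C : Finset V} :
    C ∈ MU G K ↔ C ∈ K ∧ 2 ≤ nN K C ∧ ∀ C' ∈ K, 2 ≤ nN K C' → ¬ C ⊂ C' := by
  rw [MU, Finset.mem_filter]

lemma ext_max {K : Finset (Finset V)} {C : Finset V} (hC : C ∈ K) (h2 : 2 ≤ nN K C) :
    ∃ Cm ∈ MU G K, C ⊆ Cm := by
  have hTne : (K.filter (fun C' => 2 ≤ nN K C' ∧ C ⊆ C')).Nonempty :=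
    ⟨C, Finset.mem_filter.2 ⟨hC, h2, le_refl _⟩⟩
  obtain ⟨Cm, hCm, hmax⟩ := Finset.exists_max_image _ Finset.card hTne
  rcases Finset.mem_filter.1 hCm with ⟨h1, h2', h3⟩
  refine ⟨Cm, mem_MU.2 ⟨h1, h2', fun C' hC' h2'' hss => ?_⟩, h3⟩
  have : C' ∈ K.filter (fun C' => 2 ≤ nN K C' ∧ C ⊆ C') :=
    Finset.mem_filter.2 ⟨hC', h2'', h3.trans hss.1⟩
  have he : Cm = C' := Finset.eq_of_subset_of_card_le hss.1 (hmax C' this)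
  exact (Finset.ssubset_def.1 hss).2 (by rw [he])

lemma MU_orth {K : Finset (Finset V)} (hK : Nested G K) {C1 C2 : Finset V}
    (h1 : C1 ∈ MU G K) (h2 : C2 ∈ MU G K) (hne : C1 ≠ C2) : Orth G C1 C2 := by
  obtain ⟨h1K, h1n, h1m⟩ := mem_MU.1 h1
  obtain ⟨h2K, h2n, h2m⟩ := mem_MU.1 h2
  rcases hK.2.2 C1 h1K C2 h2K with h | h | h
  · exact absurd (Finset.ssubset_iff_subset_ne.2 ⟨h, hne⟩) (h1m C2 h2K h2n)
  · exact absurd (Finset.ssubset_iff_subset_ne.2 ⟨h, hne.symm⟩) (h2m C1 h1K h1n)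
  · exact h

lemma MU_disj {K : Finset (Finset V)} (hK : Nested G K) {C1 C2 : Finset V}
    (h1 : C1 ∈ MU G K) (h2 : C2 ∈ MU G K) {w : V} (hw1 : w ∈ C1) (hw2 : w ∈ C2) :
    C1 = C2 := by
  by_contra hne
  have horth := MU_orth hK h1 h2 hne
  have e1 : C1 = {w} := orth_overlap horth (nested_nconn hK (mem_MU.1 h1).1) hw1 hw2
  have e2 : C2 = {w} :=
    orth_overlap (orth_symm horth) (nested_nconn hK (mem_MU.1 h2).1) hw2 hw1
  exact hne (e1.trans e2.symm)

end Assemble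

/-- For maximal nested sets `F`, `Gs` on a connected diagram `D`, the
connected components of the union of the elements of the symmetric difference `F Δ Gs`
are exactly the maximal unsaturated elements of `F ∩ Gs` (an element `C` of `F ∩ Gs`
being unsaturated if `n(C; F ∩ Gs) ≥ 2`). -/
theorem stmt5 {V : Type*} [Fintype V] [DecidableEq V]
    (Gr : SimpleGraph V) (hGr : Gr.Connected)
    (F Gs : Finset (Finset V)) (hF : MaxNested Gr F) (hGs : MaxNested Gr Gs) :
    ∀ C : Finset V,
      IsCC Gr (((F \ Gs) ∪ (Gs \ F)).sup id) C ↔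
        (C ∈ F ∩ Gs ∧ 2 ≤ nN (F ∩ Gs) C ∧
          ∀ C' ∈ F ∩ Gs, 2 ≤ nN (F ∩ Gs) C' → ¬ C ⊂ C') := by
  intro C
  set K := F ∩ Gs with hKdef
  set U := ((F \ Gs) ∪ (Gs \ F)).sup id with hUdef
  have hK : Nested Gr K := nested_inter hF.1 hGs.1
  have hUmem : ∀ v : V, v ∈ U ↔ ∃ B, ((B ∈ F ∧ B ∉ Gs) ∨ (B ∈ Gs ∧ B ∉ F)) ∧ v ∈ B := by
    intro v
    rw [hUdef, Finset.mem_sup]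
    constructor
    · rintro ⟨B, hB, hvB⟩
      rcases Finset.mem_union.1 hB with h | h
      · exact ⟨B, Or.inl (Finset.mem_sdiff.1 h), hvB⟩
      · exact ⟨B, Or.inr (Finset.mem_sdiff.1 h), hvB⟩
    · rintro ⟨B, hB | hB, hvB⟩
      · exact ⟨B, Finset.mem_union_left _ (Finset.mem_sdiff.2 hB), hvB⟩
      · exact ⟨B, Finset.mem_union_right _ (Finset.mem_sdiff.2 hB), hvB⟩
  have hcovU : ∀ w ∈ U, ∃ Cm ∈ MU Gr K, w ∈ Cm := by
    intro w hw
    obtain ⟨B, hB, hwB⟩ := (hUmem w).1 hw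
    rcases hB with ⟨hBF, hBG⟩ | ⟨hBG, hBF⟩
    · obtain ⟨C0, hC0, hBC0, h2⟩ := P1 hF hGs hBF hBG
      obtain ⟨Cm, hCm, hC0Cm⟩ := ext_max hC0 h2
      exact ⟨Cm, hCm, hC0Cm (hBC0 hwB)⟩
    · obtain ⟨C0, hC0, hBC0, h2⟩ := P1 hGs hF hBG hBF
      rw [Finset.inter_comm] at hC0 h2
      obtain ⟨Cm, hCm, hC0Cm⟩ := ext_max hC0 h2
      exact ⟨Cm, hCm, hC0Cm (hBC0 hwB)⟩
  have hMUsub : ∀ Cm ∈ MU Gr K, Cm ⊆ U := by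
    intro Cm hCm v hv
    obtain ⟨hCmK, h2, _⟩ := mem_MU.1 hCm
    obtain ⟨B, hB, hvB⟩ := P2 hF hGs hCmK h2 hv
    exact (hUmem v).2 ⟨B, hB, hvB⟩
  have hpair : ∀ D ∈ MU Gr K, ∀ D' ∈ MU Gr K, D ≠ D' → Orth Gr D D' :=
    fun D hD D' hD' hne => MU_orth hK hD hD' hne
  constructor
  · rintro ⟨hCU, hCconn, hCmax⟩
    obtain ⟨C0, hC0, hCC0⟩ :=
      nconn_subset_piece hcovU hpair hCU (conn_iff.1 hCconn)
    have hC0U : C0 ⊆ U := hMUsub C0 hC0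
    have hC0conn : Conn Gr C0 := hK.2.1 C0 (mem_MU.1 hC0).1
    have he : C0 = C := hCmax C0 hCC0 hC0U hC0conn
    rw [← he]
    exact mem_MU.1 hC0
  · rintro ⟨h1, h2, h3⟩
    have hCMU : C ∈ MU Gr K := mem_MU.2 ⟨h1, h2, h3⟩
    have hCconn : Conn Gr C := hK.2.1 C h1
    refine ⟨hMUsub C hCMU, hCconn, fun C' hCC' hC'U hC'conn => ?_⟩
    obtain ⟨C1, hC1, hC'C1⟩ :=
      nconn_subset_piece hcovU hpair hC'U (conn_iff.1 hC'conn)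
    obtain ⟨w, hw⟩ := (conn_iff.1 hCconn).1
    have he : C = C1 := MU_disj hK hCMU hC1 hw (hC'C1 (hCC' hw))
    exact Finset.Subset.antisymm (he ▸ hC'C1) hCC'
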